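/- For each m, the coefficient of q^m in (1/(q;q)_∞) Σ_{n=0}^∞ (-1)^n q^{n(3n+1)/2} equals N(m), the number of partitions of m with non-negative rank. -/

import Mathlib

open PowerSeries Finset

noncomputable instance : TopologicalSpace (PowerSeries ℚ) :=
  inferInstanceAs (TopologicalSpace ((Unit →₀ ℕ) → ℚ))

/-- The rank of a partition: largest part minus number of parts. -/
def rank {n : ℕ} (P : n.Partition) : ℤ :=
  (P.parts.sup : ℤ) - (Multiset.card P.parts : ℤ)

/-- The crank of a partition. -/
def crank {n : ℕ} (P : n.Partition) : ℤ :=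
  if P.parts.count 1 = 0 then (P.parts.sup : ℤ)
  else ((P.parts.filter (fun x => P.parts.count 1 < x)).card : ℤ) - (P.parts.count 1 : ℤ)

/-- The number of partitions of `n`. -/
noncomputable def p (n : ℕ) : ℕ := Nat.card n.Partition

/-- `p` extended to the integers by `0` on negatives. -/
noncomputable def pz (m : ℤ) : ℕ := if 0 ≤ m then p m.toNat else 0

/-- The number of partitions of `n` with non-negative rank. -/
noncomputable def Nrank (n : ℕ) : ℕ := Nat.card {P : n.Partition // 0 ≤ rank P}

/-- The number of partitions of `n` with positive rank. -/
noncomputable def Rrank (n : ℕ) : ℕ := Nat.card {P : n.Partition // 0 < rank P}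

/-- The number of Garden of Eden partitions of `n` (rank at most `-2`). -/
noncomputable def gePart (n : ℕ) : ℕ := Nat.card {P : n.Partition // rank P ≤ -2}

/-- The number of partitions of `n` with non-negative crank. -/
noncomputable def Ccrank (n : ℕ) : ℕ := Nat.card {P : n.Partition // 0 ≤ crank P}

/-- The number of partitions of `n` with positive crank. -/
noncomputable def Dcrank (n : ℕ) : ℕ := Nat.card {P : n.Partition // 0 < crank P}

/-- The number of partitions of `n` in which `k` is the least positive integer that is not a
part and there are more parts greater than `k` than parts less than `k`. -/
noncomputable def Mk (k n : ℕ) : ℕ := Nat.card {P : n.Partition //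
  (∀ i, 1 ≤ i → i < k → (i : ℕ) ∈ P.parts) ∧ (k : ℕ) ∉ P.parts ∧
  (P.parts.filter (fun x => x < k)).card < (P.parts.filter (fun x => k < x)).card}

/-- The number of partitions of `n` with no part divisible by 3. -/
noncomputable def p3 (n : ℕ) : ℕ := Nat.card {P : n.Partition // ∀ x ∈ P.parts, ¬ (3 ∣ x)}

/-- The infinite product `(q;q)_∞` as a formal power series. -/
noncomputable def E : PowerSeries ℚ := ∏' i : ℕ, (1 - (X : PowerSeries ℚ) ^ (i + 1))

/-- The finite product `(q;q)_n` as a formal power series. -/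
noncomputable def qPoch (n : ℕ) : PowerSeries ℚ :=
  ∏ i ∈ range n, (1 - (X : PowerSeries ℚ) ^ (i + 1))

namespace Stmt6
open Multiset

def g (n : ℕ) : ℕ := n * (3 * n + 1) / 2

lemma two_g (n : ℕ) : 2 * g n = n * (3 * n + 1) := by
  rw [g, Nat.mul_div_cancel']
  rcases Nat.even_or_odd n with h | h
  · exact Dvd.dvd.mul_right h.two_dvd _
  · exact Dvd.dvd.mul_left ((Odd.mul (by decide) h).add_one.two_dvd) _

lemma g_succ (n : ℕ) : g (n + 1) = g n + (3 * n + 2) := by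
  have h1 := two_g n
  have h2 := two_g (n + 1)
  have : (n + 1) * (3 * (n + 1) + 1) = n * (3 * n + 1) + (6 * n + 4) := by ring
  omega

lemma g_zero : g 0 = 0 := rfl

lemma g_ge (n : ℕ) : 2 * n ≤ g n := by
  induction n with
  | zero => simp [g]
  | succ n ih => rw [g_succ]; omega

lemma sum_map_pred (s : Multiset ℕ) (h : ∀ i ∈ s, 0 < i) :
    (s.map (· - 1)).sum + Multiset.card s = s.sum := by
  induction s using Multiset.induction_on with
  | empty => simp
  | cons a s ih =>
    have ha : 0 < a := h a (Multiset.mem_cons_self a s)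
    have ih' := ih fun i hi => h i (Multiset.mem_cons_of_mem hi)
    simp only [Multiset.map_cons, Multiset.sum_cons, Multiset.card_cons]
    omega

lemma sum_filter_pos (s : Multiset ℕ) : (s.filter (0 < ·)).sum = s.sum := by
  conv_rhs => rw [← Multiset.filter_add_not (0 < ·) s]
  rw [Multiset.sum_add]
  have : (s.filter (fun a => ¬ 0 < a)).sum = 0 := by
    apply Multiset.sum_eq_zero
    intro x hx
    have := Multiset.of_mem_filter hx
    omega
  omega

lemma sup_mem_of_ne_zero {s : Multiset ℕ} (h : s ≠ 0) : s.sup ∈ s := by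
  induction s using Multiset.induction_on with
  | empty => simp at h
  | cons a s ih =>
    rcases eq_or_ne s 0 with rfl | hs
    · simp
    · rw [Multiset.sup_cons]
      rcases le_total a s.sup with hle | hle
      · rw [sup_eq_right.2 hle]
        exact Multiset.mem_cons_of_mem (ih hs)
      · rw [sup_eq_left.2 hle]
        exact Multiset.mem_cons_self a s

def dysonParts (r : ℕ) (s : Multiset ℕ) : Multiset ℕ :=
  (Multiset.card s + r) ::ₘ ((s.map (· - 1)).filter (0 < ·))

def dysonInvParts (r : ℕ) (s : Multiset ℕ) : Multiset ℕ :=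
  ((s.erase s.sup).map (· + 1)) +
    Multiset.replicate ((s.sup - r) - (Multiset.card s - 1)) 1

section Forward
variable {r : ℕ} {s : Multiset ℕ}

lemma dysonParts_pos (hr : 1 ≤ r) (i : ℕ) (hi : i ∈ dysonParts r s) : 0 < i := by
  rcases Multiset.mem_cons.1 hi with rfl | hmem
  · omega
  · exact Multiset.of_mem_filter hmem

lemma dysonParts_sum (hpos : ∀ i ∈ s, 0 < i) :
    (dysonParts r s).sum = s.sum + r := by
  have h1 := sum_filter_pos (s.map (· - 1))
  have h2 := sum_map_pred s hpos
  have h4 : Multiset.card s • 1 ≤ s.sum := Multiset.card_nsmul_le_sum fun x hx => hpos x hx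
  simp only [smul_eq_mul, mul_one] at h4
  simp only [dysonParts, Multiset.sum_cons]
  omega

lemma dysonParts_filter_card_le : Multiset.card ((s.map (· - 1)).filter (0 < ·)) ≤ Multiset.card s :=
  (Multiset.card_le_card (Multiset.filter_le _ _)).trans (by rw [Multiset.card_map])

lemma dysonParts_sup (h1 : s.sup ≤ Multiset.card s + r + 1) :
    (dysonParts r s).sup = Multiset.card s + r := by
  rw [dysonParts, Multiset.sup_cons, sup_eq_left]
  apply Multiset.sup_le.2
  intro b hb
  have hb' := Multiset.mem_of_mem_filter hb
  rcases Multiset.mem_map.1 hb' with ⟨a, ha, rfl⟩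
  have : a ≤ s.sup := Multiset.le_sup ha
  omega

lemma dysonParts_card : Multiset.card (dysonParts r s) =
    Multiset.card ((s.map (· - 1)).filter (0 < ·)) + 1 := by
  simp [dysonParts]

/-- key decomposition -/
lemma filter_map_pred_eq (hpos : ∀ i ∈ s, 0 < i) :
    (s.map (· - 1)).filter (0 < ·) = (s.filter (2 ≤ ·)).map (· - 1) := by
  conv_lhs => rw [← Multiset.filter_add_not (2 ≤ ·) s]
  rw [Multiset.map_add, Multiset.filter_add]
  have h2 : ((s.filter (2 ≤ ·)).map (· - 1)).filter (0 < ·) = (s.filter (2 ≤ ·)).map (· - 1) := by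
    apply Multiset.filter_eq_self.2
    intro b hb
    rcases Multiset.mem_map.1 hb with ⟨a, ha, rfl⟩
    have := Multiset.of_mem_filter ha
    omega
  have h3 : ((s.filter (fun a => ¬ 2 ≤ a)).map (· - 1)).filter (0 < ·) = 0 := by
    rw [Multiset.filter_eq_nil]
    intro b hb
    rcases Multiset.mem_map.1 hb with ⟨a, ha, rfl⟩
    have := Multiset.of_mem_filter ha
    omega
  rw [h2, h3, add_zero]

lemma dyson_left_inv (hpos : ∀ i ∈ s, 0 < i) (h1 : s.sup ≤ Multiset.card s + r + 1) :
    dysonInvParts r (dysonParts r s) = s := by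
  have hsup := dysonParts_sup h1
  have hfil := filter_map_pred_eq hpos
  rw [dysonInvParts, hsup]
  have herase : (dysonParts r s).erase (Multiset.card s + r) =
      (s.filter (2 ≤ ·)).map (· - 1) := by
    rw [dysonParts, Multiset.erase_cons_head, hfil]
  rw [herase]
  have hmapmap : ((s.filter (2 ≤ ·)).map (· - 1)).map (· + 1) = s.filter (2 ≤ ·) := by
    rw [Multiset.map_map]
    rw [show ((· + 1) ∘ (· - 1) : ℕ → ℕ) = fun a => a - 1 + 1 from rfl]
    rw [Multiset.map_congr rfl ?_, Multiset.map_id']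
    intro a ha
    have := Multiset.of_mem_filter ha
    omega
  rw [hmapmap]
  have hcard : Multiset.card (dysonParts r s) =
      Multiset.card ((s.filter (2 ≤ ·)).map (· - 1)) + 1 := by
    rw [dysonParts_card, hfil]
  rw [hcard]
  have hrep : Multiset.card s + r - r - (Multiset.card ((s.filter (2 ≤ ·)).map (· - 1)) + 1 - 1) =
      Multiset.card (s.filter (fun a => ¬ 2 ≤ a)) := by
    have hsplit : Multiset.card (s.filter (2 ≤ ·)) + Multiset.card (s.filter (fun a => ¬ 2 ≤ a)) =
        Multiset.card s := by
      rw [← Multiset.card_add, Multiset.filter_add_not]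
    rw [Multiset.card_map]
    omega
  rw [hrep]
  have hone : Multiset.replicate (Multiset.card (s.filter (fun a => ¬ 2 ≤ a))) 1 =
      s.filter (fun a => ¬ 2 ≤ a) := by
    symm
    rw [Multiset.eq_replicate]
    refine ⟨rfl, fun b hb => ?_⟩
    have h1 := Multiset.of_mem_filter hb
    have h2 := hpos b (Multiset.mem_of_mem_filter hb)
    omega
  rw [hone, Multiset.filter_add_not]

end Forward

section Backward
variable {r : ℕ} {s : Multiset ℕ}

lemma dysonInvParts_pos (i : ℕ) (hi : i ∈ dysonInvParts r s) : 0 < i := by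
  rcases Multiset.mem_add.1 hi with hmem | hmem
  · rcases Multiset.mem_map.1 hmem with ⟨a, _, rfl⟩
    omega
  · rw [Multiset.eq_of_mem_replicate hmem]
    omega

lemma dysonInvParts_sum (hs : s ≠ 0) (hr : r ≤ s.sup)
    (h2 : Multiset.card s - 1 ≤ s.sup - r) :
    (dysonInvParts r s).sum + r = s.sum := by
  have hmem : s.sup ∈ s := sup_mem_of_ne_zero hs
  have hconss := Multiset.cons_erase hmem
  have hsum : s.sup + (s.erase s.sup).sum = s.sum := by
    conv_rhs => rw [← hconss]
    rw [Multiset.sum_cons]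
  have hcard : Multiset.card (s.erase s.sup) + 1 = Multiset.card s := by
    conv_rhs => rw [← hconss]
    rw [Multiset.card_cons]
  have hcard_pos : 1 ≤ Multiset.card s := by
    rw [← hcard]; omega
  have hmapsum : ((s.erase s.sup).map (· + 1)).sum =
      (s.erase s.sup).sum + Multiset.card (s.erase s.sup) := by
    induction (s.erase s.sup) using Multiset.induction_on with
    | empty => simp
    | cons a t ih => simp only [Multiset.map_cons, Multiset.sum_cons, Multiset.card_cons]; omega
  rw [dysonInvParts, Multiset.sum_add, hmapsum, Multiset.sum_replicate]
  simp only [smul_eq_mul, mul_one]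
  omega

lemma dysonInvParts_card (hs : s ≠ 0) (hr : r ≤ s.sup)
    (h2 : Multiset.card s - 1 ≤ s.sup - r) :
    Multiset.card (dysonInvParts r s) = s.sup - r := by
  have hmem : s.sup ∈ s := sup_mem_of_ne_zero hs
  have hcard : Multiset.card (s.erase s.sup) + 1 = Multiset.card s := by
    conv_rhs => rw [← Multiset.cons_erase hmem]
    rw [Multiset.card_cons]
  rw [dysonInvParts, Multiset.card_add, Multiset.card_map, Multiset.card_replicate]
  omega

lemma dysonInvParts_sup_le (hs : s ≠ 0) :
    (dysonInvParts r s).sup ≤ s.sup + 1 := by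
  apply Multiset.sup_le.2
  intro b hb
  rcases Multiset.mem_add.1 hb with hmem | hmem
  · rcases Multiset.mem_map.1 hmem with ⟨a, ha, rfl⟩
    have : a ≤ s.sup := Multiset.le_sup (Multiset.mem_of_mem_erase ha)
    omega
  · rw [Multiset.eq_of_mem_replicate hmem]
    omega

lemma dyson_right_inv (hs : s ≠ 0) (hpos : ∀ i ∈ s, 0 < i) (hr : r ≤ s.sup)
    (h2 : Multiset.card s - 1 ≤ s.sup - r) :
    dysonParts r (dysonInvParts r s) = s := by
  have hmem : s.sup ∈ s := sup_mem_of_ne_zero hs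
  have hcardinv := dysonInvParts_card hs hr h2
  rw [dysonParts, hcardinv]
  have hfil : ((dysonInvParts r s).map (· - 1)).filter (0 < ·) = s.erase s.sup := by
    rw [dysonInvParts, Multiset.map_add, Multiset.map_map, Multiset.filter_add]
    have e1 : (s.erase s.sup).map ((· - 1) ∘ (· + 1)) = s.erase s.sup := by
      rw [show ((· - 1) ∘ (· + 1) : ℕ → ℕ) = fun a => a + 1 - 1 from rfl]
      rw [Multiset.map_congr rfl ?_, Multiset.map_id']
      intro a ha
      omega
    have e2 : ((s.erase s.sup).map id).filter (0 < ·) = s.erase s.sup := by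
      rw [Multiset.map_id]
      apply Multiset.filter_eq_self.2
      intro b hb
      exact hpos b (Multiset.mem_of_mem_erase hb)
    rw [e1]
    have e3 : (s.erase s.sup).filter (0 < ·) = s.erase s.sup := by
      apply Multiset.filter_eq_self.2
      intro b hb
      exact hpos b (Multiset.mem_of_mem_erase hb)
    rw [e3]
    have e4 : ((Multiset.replicate (s.sup - r - (Multiset.card s - 1)) 1).map (· - 1)).filter
        (0 < ·) = 0 := by
      rw [Multiset.map_replicate]
      rw [Multiset.filter_eq_nil]
      intro b hb
      rw [Multiset.eq_of_mem_replicate hb]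
      omega
    rw [e4, add_zero]
  rw [hfil]
  have : s.sup - r + r = s.sup := by omega
  rw [this, Multiset.cons_erase hmem]

end Backward

end Stmt6

namespace Stmt6x
open Stmt6 Multiset

lemma rank_le_iff {n r : ℕ} (P : n.Partition) :
    rank P ≤ (r : ℤ) + 1 ↔ P.parts.sup ≤ Multiset.card P.parts + r + 1 := by
  unfold rank; omega

lemma rank_ge_iff {n r : ℕ} (P : n.Partition) :
    (r : ℤ) - 1 ≤ rank P ↔ r + Multiset.card P.parts ≤ P.parts.sup + 1 := by
  unfold rank; omega

lemma parts_nonempty {n : ℕ} (hn : 0 < n) (P : n.Partition) : P.parts ≠ 0 := by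
  intro h
  have := P.parts_sum
  rw [h] at this
  simp at this
  omega

def dysonEquiv (r n : ℕ) (hr : 1 ≤ r) :
    {P : n.Partition // rank P ≤ (r : ℤ) + 1} ≃
      {P : (n + r).Partition // (r : ℤ) - 1 ≤ rank P} where
  toFun x :=
    ⟨⟨dysonParts r x.1.parts, fun hi => dysonParts_pos hr _ hi, by
        rw [dysonParts_sum (fun i hi => x.1.parts_pos hi), x.1.parts_sum]⟩, by
      rw [rank_ge_iff]
      show r + Multiset.card (dysonParts r x.1.parts) ≤ (dysonParts r x.1.parts).sup + 1
      have h1 := (rank_le_iff x.1).1 x.2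
      rw [dysonParts_sup h1, dysonParts_card]
      have := dysonParts_filter_card_le (s := x.1.parts)
      omega⟩
  invFun x := by
    have hne : x.1.parts ≠ 0 := parts_nonempty (by omega) x.1
    have hcard1 : 1 ≤ Multiset.card x.1.parts := Multiset.card_pos.2 hne
    have h2 := (rank_ge_iff x.1).1 x.2
    refine ⟨⟨dysonInvParts r x.1.parts, fun hi => dysonInvParts_pos _ hi, ?_⟩, ?_⟩
    · have hsum := dysonInvParts_sum (r := r) hne (by omega) (by omega)
      rw [x.1.parts_sum] at hsum
      omega
    · rw [rank_le_iff]
      show (dysonInvParts r x.1.parts).sup ≤ Multiset.card (dysonInvParts r x.1.parts) + r + 1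
      rw [dysonInvParts_card (r := r) hne (by omega) (by omega)]
      have := dysonInvParts_sup_le (r := r) hne
      omega
  left_inv x := by
    apply Subtype.ext
    apply Nat.Partition.ext
    show dysonInvParts r (dysonParts r x.1.parts) = x.1.parts
    exact dyson_left_inv (fun i hi => x.1.parts_pos hi) ((rank_le_iff x.1).1 x.2)
  right_inv x := by
    apply Subtype.ext
    apply Nat.Partition.ext
    show dysonParts r (dysonInvParts r x.1.parts) = x.1.parts
    have hne : x.1.parts ≠ 0 := parts_nonempty (by omega) x.1
    have hcard1 : 1 ≤ Multiset.card x.1.parts := Multiset.card_pos.2 hne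
    have h2 := (rank_ge_iff x.1).1 x.2
    exact dyson_right_inv hne (fun i hi => x.1.parts_pos hi) (by omega) (by omega)

/-- `A s m` : number of partitions of `m` with rank at least `s`. -/
noncomputable def A (s : ℤ) (m : ℕ) : ℕ := Nat.card {P : m.Partition // s ≤ rank P}

lemma parts_sup_le {n : ℕ} (P : n.Partition) : P.parts.sup ≤ n := by
  apply Multiset.sup_le.2
  intro b hb
  exact (Multiset.le_sum_of_mem hb).trans_eq P.parts_sum

lemma rank_le_self {m : ℕ} (hm : 0 < m) (P : m.Partition) : rank P ≤ (m : ℤ) - 1 := by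
  have h1 := parts_sup_le P
  have h3 : 0 < Multiset.card P.parts := Multiset.card_pos.2 (parts_nonempty hm P)
  unfold rank
  omega

lemma A_eq_zero {s : ℤ} {m : ℕ} (h : (m : ℤ) ≤ s) (h2 : 0 < s) : A s m = 0 := by
  rw [A, Nat.card_eq_zero]
  left
  constructor
  rintro ⟨P, hP⟩
  rcases Nat.eq_zero_or_pos m with rfl | hm
  · have hp : P.parts = 0 := by
      apply Multiset.eq_zero_of_forall_notMem
      intro x hx
      have h1 := P.parts_pos hx
      have hsum := P.parts_sum
      have h2 := Multiset.le_sum_of_mem hx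
      omega
    rw [rank] at hP
    rw [hp] at hP
    simp at hP
    omega
  · have := rank_le_self hm P
    omega

lemma card_add_compl {α : Type*} [Fintype α] (q : α → Prop) [DecidablePred q] :
    Nat.card {x // q x} + Nat.card {x // ¬ q x} = Nat.card α := by
  simp only [Nat.card_eq_fintype_card, Fintype.card_subtype]
  rw [Fintype.card]
  exact Finset.card_filter_add_card_filter_not _

lemma A_recursion (r n : ℕ) (hr : 1 ≤ r) :
    A ((r : ℤ) - 1) (n + r) + A ((r : ℤ) + 2) n = p n := by
  classical
  have h1 : A ((r : ℤ) - 1) (n + r) = Nat.card {P : n.Partition // rank P ≤ (r : ℤ) + 1} :=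
    Nat.card_congr (dysonEquiv r n hr).symm
  have h2 : A ((r : ℤ) + 2) n = Nat.card {P : n.Partition // ¬ rank P ≤ (r : ℤ) + 1} := by
    rw [A]
    apply Nat.card_congr
    apply Equiv.subtypeEquivRight
    intro P
    omega
  rw [h1, h2, p]
  exact card_add_compl _

end Stmt6x

namespace Stmt6y
open Stmt6 Stmt6x Finset

lemma g_mono : Monotone g := by
  apply monotone_nat_of_le_succ
  intro n
  rw [g_succ]
  omega

/-- offset `g (r+j) - g r`. -/
def ofs (r j : ℕ) : ℕ := g (r + j) - g r

lemma ofs_zero (r : ℕ) : ofs r 0 = 0 := by simp [ofs]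

lemma ofs_one (r : ℕ) : ofs r 1 = 3 * r + 2 := by
  rw [ofs, g_succ]
  omega

lemma ofs_succ (r j : ℕ) : ofs r (j + 1) = (3 * r + 2) + ofs (r + 1) j := by
  have h1 : g (r + (j + 1)) = g ((r + 1) + j) := by ring_nf
  have h2 := g_succ r
  have h3 : g (r + 1) ≤ g ((r + 1) + j) := g_mono (by omega)
  rw [ofs, ofs, h1, h2]
  omega

lemma ofs_ge (r j : ℕ) : 2 * j ≤ ofs r j := by
  induction j generalizing r with
  | zero => simp [ofs_zero]
  | succ j ih =>
    rw [ofs_succ]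
    have := ih (r + 1)
    omega

/-- term of the alternating sum -/
noncomputable def T (r j m : ℕ) : ℤ :=
  if ofs r (j + 1) ≤ m then (p (m - ofs r (j + 1)) : ℤ) else 0

lemma claimC (m : ℕ) : ∀ r : ℕ, (A (3 * (r : ℤ) + 1) m : ℤ) =
    ∑ j ∈ range (m + 1), (-1 : ℤ) ^ j * T r j m := by
  induction m using Nat.strong_induction_on with
  | _ m ih =>
    intro r
    rcases lt_or_ge m (3 * r + 2) with hm | hm
    · rw [A_eq_zero (by omega) (by omega)]
      rw [eq_comm, Nat.cast_zero]
      apply Finset.sum_eq_zero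
      intro j _
      rw [T, if_neg, mul_zero]
      have h1 := ofs_ge r (j + 1)
      have h2 : ofs r 1 ≤ ofs r (j + 1) := by
        rw [ofs, ofs]
        have := g_mono (show r + 1 ≤ r + (j + 1) by omega)
        have := g_mono (show r ≤ r + 1 by omega)
        omega
      rw [ofs_one] at h2
      omega
    · obtain ⟨n, rfl⟩ : ∃ n, m = n + (3 * r + 2) := ⟨m - (3 * r + 2), by omega⟩
      -- Dyson recursion with r' = 3r + 2
      have hrec := A_recursion (3 * r + 2) n (by omega)
      have hc1 : ((3 * r + 2 : ℕ) : ℤ) - 1 = 3 * (r : ℤ) + 1 := by push_cast; ring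
      have hc2 : ((3 * r + 2 : ℕ) : ℤ) + 2 = 3 * ((r : ℤ) + 1) + 1 := by push_cast; ring
      rw [hc1, hc2] at hrec
      have hIH := ih n (by omega) (r + 1)
      push_cast [show (((r : ℕ) + 1 : ℕ) : ℤ) = (r : ℤ) + 1 from by push_cast; ring] at hIH
      -- LHS
      have hA : (A (3 * (r : ℤ) + 1) (n + (3 * r + 2)) : ℤ) =
          (p n : ℤ) - (A (3 * ((r : ℤ) + 1) + 1) n : ℤ) := by
        omega
      have hT0 : (-1 : ℤ) ^ 0 * T r 0 (n + (3 * r + 2)) = (p n : ℤ) := by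
        rw [T, ofs_one, if_pos (by omega), pow_zero, one_mul,
          show n + (3 * r + 2) - (3 * r + 2) = n from by omega]
      have hterm : ∀ j, (-1 : ℤ) ^ (j + 1) * T r (j + 1) (n + (3 * r + 2)) = -((-1 : ℤ) ^ j * T (r + 1) j n) := by
        intro j
        have h1 : ofs r (j + 2) = (3 * r + 2) + ofs (r + 1) (j + 1) := ofs_succ r (j + 1)
        rw [T, T, h1, pow_succ]
        by_cases hcond : ofs (r + 1) (j + 1) ≤ n
        · rw [if_pos (by omega), if_pos hcond]
          have : n + (3 * r + 2) - ((3 * r + 2) + ofs (r + 1) (j + 1)) = n - ofs (r + 1) (j + 1) := by omega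
          rw [this]; ring
        · rw [if_neg (by omega), if_neg hcond]; ring
      have hext : ∑ j ∈ range (n + 1), (-1 : ℤ) ^ j * T (r + 1) j n =
          ∑ j ∈ range (n + (3 * r + 2)), (-1 : ℤ) ^ j * T (r + 1) j n := by
        apply Finset.sum_subset
        · apply Finset.range_subset_range.2; omega
        · intro j _ hj
          rw [Finset.mem_range, not_lt] at hj
          rw [T, if_neg, mul_zero]
          have := ofs_ge (r + 1) (j + 1)
          omega
      have hRHS : ∑ j ∈ range ((n + (3 * r + 2)) + 1), (-1 : ℤ) ^ j * T r j (n + (3 * r + 2)) =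
          (p n : ℤ) - ∑ j ∈ range (n + 1), (-1 : ℤ) ^ j * T (r + 1) j n := by
        rw [Finset.sum_range_succ' (fun j => (-1 : ℤ) ^ j * T r j (n + (3 * r + 2))) (n + (3 * r + 2)), hT0]
        have : ∑ j ∈ range (n + (3 * r + 2)), (-1 : ℤ) ^ (j + 1) * T r (j + 1) (n + (3 * r + 2)) =
            -∑ j ∈ range (n + (3 * r + 2)), (-1 : ℤ) ^ j * T (r + 1) j n := by
          rw [← Finset.sum_neg_distrib]
          exact Finset.sum_congr rfl fun j _ => hterm j
        rw [this, hext]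
        ring
      rw [hA, hIH, hRHS]

end Stmt6y

namespace Stmt6c
open Multiset YoungDiagram

lemma list_range_map_sum (n : ℕ) (f : ℕ → ℕ) :
    ((List.range n).map f).sum = ∑ i ∈ Finset.range n, f i := by
  rw [Finset.sum]
  rw [Finset.range_val]
  rfl

lemma rowLens_sum (μ : YoungDiagram) : μ.rowLens.sum = μ.cells.card := by
  have hcells : μ.cells = (Finset.range (μ.colLen 0)).biUnion (fun i => μ.row i) := by
    ext c
    simp only [Finset.mem_biUnion, Finset.mem_range, mem_row_iff]
    constructor
    · intro hc
      refine ⟨c.1, ?_, ?_, rfl⟩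
      · rw [← YoungDiagram.mem_iff_lt_colLen]
        exact μ.up_left_mem (le_refl _) (Nat.zero_le _) hc
      · exact hc
    · rintro ⟨i, _, hc, rfl⟩
      exact hc
  rw [hcells, Finset.card_biUnion]
  · rw [YoungDiagram.rowLens, list_range_map_sum]
    apply Finset.sum_congr rfl
    intro i _
    rw [YoungDiagram.rowLen_eq_card]
  · intro i _ j _ hij
    rw [Function.onFun, Finset.disjoint_left]
    intro c hc hc'
    rw [mem_row_iff] at hc hc'
    exact hij (hc.2 ▸ hc'.2 ▸ rfl)

lemma transpose_card (μ : YoungDiagram) : μ.transpose.cells.card = μ.cells.card := by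
  apply Finset.card_bij (fun c _ => c.swap)
  · intro c hc
    rw [YoungDiagram.mem_cells] at hc ⊢
    rwa [YoungDiagram.mem_transpose] at hc
  · intro a _ b _ h
    exact Prod.swap_injective h
  · intro c hc
    refine ⟨c.swap, ?_, by simp⟩
    rw [YoungDiagram.mem_cells] at hc ⊢
    rw [YoungDiagram.mem_transpose, Prod.swap_swap]
    exact hc

lemma sup_coe_sorted (l : List ℕ) (h : l.Pairwise (· ≥ ·)) : (↑l : Multiset ℕ).sup = l.headI := by
  cases l with
  | nil => simp
  | cons a t =>
    rw [List.pairwise_cons] at h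
    show (a ::ₘ (↑t : Multiset ℕ)).sup = a
    rw [Multiset.sup_cons, sup_eq_left]
    apply Multiset.sup_le.2
    intro b hb
    exact h.1 b (by exact_mod_cast hb)

lemma headI_rowLens (μ : YoungDiagram) : μ.rowLens.headI = μ.rowLen 0 := by
  rw [YoungDiagram.rowLens]
  rcases Nat.eq_zero_or_pos (μ.colLen 0) with h | h
  · rw [h]
    simp only [List.range_zero, List.map_nil, List.headI_nil]
    show (0 : ℕ) = μ.rowLen 0
    symm
    by_contra hcon
    have : (0, 0) ∈ μ := by
      rw [YoungDiagram.mem_iff_lt_rowLen]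
      omega
    rw [YoungDiagram.mem_iff_lt_colLen] at this
    omega
  · obtain ⟨k, hk⟩ : ∃ k, μ.colLen 0 = k + 1 := ⟨μ.colLen 0 - 1, by omega⟩
    rw [hk, List.range_succ_eq_map]
    simp

/-- The Young diagram of a partition. -/
def toYD {n : ℕ} (P : n.Partition) : YoungDiagram :=
  YoungDiagram.ofRowLens (P.parts.sort (· ≥ ·)) (Multiset.pairwise_sort (s := P.parts) (r := fun a b => a ≥ b)).sortedGE

lemma toYD_rowLens {n : ℕ} (P : n.Partition) : (toYD P).rowLens = P.parts.sort (· ≥ ·) := by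
  apply YoungDiagram.rowLens_ofRowLens_eq_self
  intro x hx
  exact P.parts_pos (by rwa [Multiset.mem_sort] at hx)

/-- Conjugate partition. -/
def conj {n : ℕ} (P : n.Partition) : n.Partition where
  parts := ↑(toYD P).transpose.rowLens
  parts_pos := fun hi => YoungDiagram.pos_of_mem_rowLens _ _ (by exact_mod_cast hi)
  parts_sum := by
    rw [Multiset.sum_coe, rowLens_sum, transpose_card, ← rowLens_sum, toYD_rowLens]
    have : (P.parts.sort (· ≥ ·) : List ℕ).sum = (↑(P.parts.sort (· ≥ ·)) : Multiset ℕ).sum := by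
      rw [Multiset.sum_coe]
    rw [this, Multiset.sort_eq, P.parts_sum]

lemma conj_parts_sup {n : ℕ} (P : n.Partition) :
    (conj P).parts.sup = Multiset.card P.parts := by
  show (↑(toYD P).transpose.rowLens : Multiset ℕ).sup = _
  rw [sup_coe_sorted _ (YoungDiagram.rowLens_sorted _).pairwise, headI_rowLens,
    YoungDiagram.rowLen_transpose, ← YoungDiagram.length_rowLens, toYD_rowLens]
  rw [← Multiset.coe_card, Multiset.sort_eq]

lemma conj_parts_card {n : ℕ} (P : n.Partition) :
    Multiset.card (conj P).parts = P.parts.sup := by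
  show Multiset.card (↑(toYD P).transpose.rowLens : Multiset ℕ) = _
  rw [Multiset.coe_card, YoungDiagram.length_rowLens, YoungDiagram.colLen_transpose,
    ← headI_rowLens, toYD_rowLens, ← sup_coe_sorted _ (Multiset.pairwise_sort (s := P.parts) (r := fun a b => a ≥ b)),
    Multiset.sort_eq]

lemma rank_conj {n : ℕ} (P : n.Partition) : rank (conj P) = -rank P := by
  rw [rank, rank, conj_parts_sup, conj_parts_card]
  ring

lemma conj_conj {n : ℕ} (P : n.Partition) : conj (conj P) = P := by
  apply Nat.Partition.ext
  show ↑(toYD (conj P)).transpose.rowLens = P.parts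
  have h1 : toYD (conj P) = (toYD P).transpose := by
    rw [toYD]
    have hsort : (conj P).parts.sort (· ≥ ·) = (toYD P).transpose.rowLens := by
      apply List.Perm.eq_of_pairwise' (Multiset.pairwise_sort (s := (conj P).parts) (r := fun a b => a ≥ b))
        (YoungDiagram.rowLens_sorted _).pairwise
      rw [← Multiset.coe_eq_coe, Multiset.sort_eq]
      rfl
    rw [← YoungDiagram.ofRowLens_to_rowLens_eq_self (μ := (toYD P).transpose)]
    congr 1
  rw [h1, YoungDiagram.transpose_transpose, toYD_rowLens, Multiset.sort_eq]

end Stmt6c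


namespace Stmt6z
open Stmt6 Stmt6x Stmt6y Stmt6c Finset

def negRankEquiv (m : ℕ) : {P : m.Partition // rank P < 0} ≃ {P : m.Partition // 0 < rank P} where
  toFun x := ⟨conj x.1, by rw [rank_conj]; omega⟩
  invFun x := ⟨conj x.1, by rw [rank_conj]; omega⟩
  left_inv x := Subtype.ext (conj_conj x.1)
  right_inv x := Subtype.ext (conj_conj x.1)

lemma Nrank_add_A (m : ℕ) : Nrank m + A 1 m = p m := by
  classical
  have h1 : A 1 m = Nat.card {P : m.Partition // ¬ 0 ≤ rank P} := by
    rw [A]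
    apply Nat.card_congr
    refine Equiv.trans ?_ ((negRankEquiv m).symm.trans (Equiv.subtypeEquivRight ?_))
    · exact Equiv.subtypeEquivRight fun P => by omega
    · intro P; omega
  rw [h1, Nrank, p]
  exact card_add_compl _

lemma ofs_zero_left (k : ℕ) : ofs 0 k = g k := by
  rw [ofs, g_zero, Nat.zero_add, Nat.sub_zero]

theorem comb_main (m : ℕ) : (Nrank m : ℤ) =
    ∑ j ∈ Finset.range (m + 1), (-1 : ℤ) ^ j * (if g j ≤ m then (p (m - g j) : ℤ) else 0) := by
  have hC := claimC m 0
  push_cast at hC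
  have hT : ∀ j, T 0 j m = (if g (j + 1) ≤ m then (p (m - g (j + 1)) : ℤ) else 0) := by
    intro j
    rw [T, ofs_zero_left]
  have hA := Nrank_add_A m
  have hNk : (Nrank m : ℤ) = (p m : ℤ) - (A 1 m : ℤ) := by
    omega
  rw [hNk]
  rw [hC]
  rw [Finset.sum_range_succ' (fun j => (-1 : ℤ) ^ j * (if g j ≤ m then (p (m - g j) : ℤ) else 0)) m]
  have h0 : (-1 : ℤ) ^ 0 * (if g 0 ≤ m then (p (m - g 0) : ℤ) else 0) = (p m : ℤ) := by
    rw [g_zero, pow_zero, one_mul, if_pos (Nat.zero_le m), Nat.sub_zero]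
  rw [h0]
  have hlast : ∑ j ∈ Finset.range (m + 1), (-1 : ℤ) ^ j * T 0 j m =
      ∑ j ∈ Finset.range m, (-1 : ℤ) ^ j * T 0 j m := by
    rw [Finset.sum_range_succ]
    have : T 0 m m = 0 := by
      rw [T, if_neg]
      have h1 := g_ge (m + 1)
      have h2 := ofs_zero_left (m + 1)
      omega
    rw [this, mul_zero, add_zero]
  rw [hlast]
  have : ∑ j ∈ Finset.range m, (-1 : ℤ) ^ (j + 1) *
      (if g (j + 1) ≤ m then (p (m - g (j + 1)) : ℤ) else 0) =
      -∑ j ∈ Finset.range m, (-1 : ℤ) ^ j * T 0 j m := by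
    rw [← Finset.sum_neg_distrib]
    apply Finset.sum_congr rfl
    intro j _
    rw [hT j, pow_succ]
    ring
  rw [this]
  ring

end Stmt6z

namespace Stmt6p

noncomputable instance : T2Space (PowerSeries ℚ) :=
  inferInstanceAs (T2Space ((Unit →₀ ℕ) → ℚ))

lemma coeff_eval (φ : PowerSeries ℚ) (σ : Unit →₀ ℕ) : φ σ = coeff (R := ℚ) (σ ()) φ := by
  conv_lhs => rw [Finsupp.unique_single σ]
  rfl

lemma tendsto_coord {ι : Type*} (F : Finset ι → PowerSeries ℚ) (S : PowerSeries ℚ)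
    (h : ∀ k : ℕ, ∃ t : Finset ι, ∀ s : Finset ι, t ⊆ s → coeff (R := ℚ) k (F s) = coeff (R := ℚ) k S) :
    Filter.Tendsto F Filter.atTop (nhds S) := by
  apply tendsto_pi_nhds.2
  intro σ
  obtain ⟨t, ht⟩ := h (σ ())
  apply Filter.Tendsto.congr' _ tendsto_const_nhds
  filter_upwards [Filter.eventually_ge_atTop t] with s hs
  have h2 := ht s hs
  rw [coeff_eval (F s) σ, coeff_eval S σ, h2]

lemma constantCoeff_factor (i : ℕ) :
    constantCoeff (R := ℚ) (1 - (X : PowerSeries ℚ) ^ (i + 1)) = 1 := by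
  rw [map_sub, map_one, map_pow, constantCoeff_X]
  simp

lemma coeff_prod_one (t : Finset ℕ) (k : ℕ) (h : ∀ i ∈ t, k ≤ i) :
    coeff (R := ℚ) k (∏ i ∈ t, (1 - (X : PowerSeries ℚ) ^ (i + 1))) = if k = 0 then 1 else 0 := by
  induction t using Finset.induction_on with
  | empty => simp [coeff_one]
  | insert _ _ ha ih =>
    rename_i a t
    rw [Finset.prod_insert ha]
    have hk : k ≤ a := h a (Finset.mem_insert_self a t)
    have ihh := ih (fun i hi => h i (Finset.mem_insert_of_mem hi))
    rw [sub_mul, one_mul, map_sub, ihh]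
    have : coeff (R := ℚ) k ((X : PowerSeries ℚ) ^ (a + 1) *
        ∏ i ∈ t, (1 - (X : PowerSeries ℚ) ^ (i + 1))) = 0 := by
      rw [coeff_mul]
      apply Finset.sum_eq_zero
      intro x hx
      rw [Finset.HasAntidiagonal.mem_antidiagonal] at hx
      rw [coeff_X_pow, if_neg (by omega), zero_mul]
    rw [this, sub_zero]

lemma coeff_prod_subset (s : Finset ℕ) (k : ℕ) (h : range k ⊆ s) :
    coeff (R := ℚ) k (∏ i ∈ s, (1 - (X : PowerSeries ℚ) ^ (i + 1))) = coeff (R := ℚ) k (qPoch k) := by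
  rw [qPoch, ← Finset.prod_sdiff h, coeff_mul]
  rw [Finset.sum_eq_single (0, k)]
  · have h0 : coeff (R := ℚ) 0 (∏ i ∈ s \ range k, (1 - (X : PowerSeries ℚ) ^ (i + 1))) = 1 := by
      rw [coeff_prod_one (s \ range k) 0 (fun i _ => Nat.zero_le i)]
      simp
    show coeff (R := ℚ) 0 _ * coeff (R := ℚ) k _ = _
    rw [h0, one_mul]
  · rintro ⟨u, v⟩ hx hne
    rw [Finset.HasAntidiagonal.mem_antidiagonal] at hx
    have hx' : u + v = k := hx
    have hu : u ≠ 0 := by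
      rintro rfl
      apply hne
      have hvk : v = k := by omega
      rw [hvk]
    have h0 : coeff (R := ℚ) u (∏ i ∈ s \ range k, (1 - (X : PowerSeries ℚ) ^ (i + 1))) = 0 := by
      rw [coeff_prod_one (s \ range k) u, if_neg hu]
      intro i hi
      rw [Finset.mem_sdiff, Finset.mem_range] at hi
      omega
    show coeff (R := ℚ) u _ * coeff (R := ℚ) v _ = 0
    rw [h0, zero_mul]
  · intro hmem
    exfalso
    exact hmem (by simp)

noncomputable def EE : PowerSeries ℚ := PowerSeries.mk fun k => coeff (R := ℚ) k (qPoch k)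

lemma hasProd_E : HasProd (fun i => 1 - (X : PowerSeries ℚ) ^ (i + 1)) EE := by
  show Filter.Tendsto _ Filter.atTop (nhds EE)
  apply tendsto_coord
  intro k
  refine ⟨range k, fun s hs => ?_⟩
  rw [coeff_prod_subset s k hs, EE, coeff_mk]

lemma E_eq : E = EE := hasProd_E.tprod_eq

lemma coeff_E (k : ℕ) : coeff (R := ℚ) k E = coeff (R := ℚ) k (qPoch k) := by
  rw [E_eq, EE, coeff_mk]

lemma coeff_E' (k M : ℕ) (h : k ≤ M) : coeff (R := ℚ) k E = coeff (R := ℚ) k (qPoch M) := by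
  rw [coeff_E]
  exact (coeff_prod_subset (range M) k (by simp [Finset.range_subset_range, h])).symm

end Stmt6p

namespace GF
open Finset.HasAntidiagonal
open scoped Classical

variable {α : Type*}

noncomputable def indicatorSeries (α : Type*) [Semiring α] (s : Set ℕ) : PowerSeries α :=
  PowerSeries.mk fun n => if n ∈ s then 1 else 0

theorem coeff_indicator (s : Set ℕ) [Semiring α] (n : ℕ) :
    coeff (R := α) n (indicatorSeries _ s) = if n ∈ s then 1 else 0 :=
  coeff_mk _ _

theorem constantCoeff_indicator (s : Set ℕ) [Semiring α] :
    constantCoeff (R := α) (indicatorSeries _ s) = if 0 ∈ s then 1 else 0 :=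
  rfl

theorem num_series' [Field α] (i : ℕ) :
    (1 - (X : PowerSeries α) ^ (i + 1))⁻¹ = indicatorSeries α {k | i + 1 ∣ k} := by
  rw [PowerSeries.inv_eq_iff_mul_eq_one]
  · ext n
    cases n with
    | zero => simp [mul_sub, zero_pow, constantCoeff_indicator]
    | succ n =>
      simp only [coeff_one, if_false, mul_sub, mul_one, coeff_indicator,
        LinearMap.map_sub, reduceCtorEq]
      simp_rw [coeff_mul, coeff_X_pow, coeff_indicator, @boole_mul _ _ _ _]
      simp only [Set.mem_setOf_eq]
      erw [sum_ite, sum_ite]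
      simp_rw [@filter_filter _ _ _ _ _, sum_const_zero, add_zero, sum_const, nsmul_eq_mul, mul_one,
        sub_eq_iff_eq_add, zero_add]
      symm
      split_ifs with h
      · suffices #{a ∈ antidiagonal (n + 1) | i + 1 ∣ a.fst ∧ a.snd = i + 1} = 1 by
          convert congr_arg ((↑) : ℕ → α) this; norm_cast
        rw [card_eq_one]
        cases' h with p hp
        refine ⟨((i + 1) * (p - 1), i + 1), ?_⟩
        ext ⟨a₁, a₂⟩
        simp only [mem_filter, Prod.mk.injEq, Finset.HasAntidiagonal.mem_antidiagonal, mem_singleton]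
        constructor
        · rintro ⟨a_left, ⟨a, rfl⟩, rfl⟩
          refine ⟨?_, rfl⟩
          rw [Nat.mul_sub_left_distrib, ← hp, ← a_left, mul_one, Nat.add_sub_cancel]
        · rintro ⟨rfl, rfl⟩
          match p with
          | 0 => rw [mul_zero] at hp; cases hp
          | p + 1 => rw [hp]; simp [mul_add]
      · suffices #{a ∈ antidiagonal (n + 1) | i + 1 ∣ a.fst ∧ a.snd = i + 1} = 0 by
          convert congr_arg ((↑) : ℕ → α) this; norm_cast
        rw [card_eq_zero]
        apply eq_empty_of_forall_notMem
        simp only [Prod.forall, mem_filter, not_and, Finset.HasAntidiagonal.mem_antidiagonal]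
        rintro _ h₁ h₂ ⟨a, rfl⟩ rfl
        apply h
        simp [← h₂]
  · simp [zero_pow]

theorem partialGF_prop (α : Type*) [CommSemiring α] (n : ℕ) (s : Finset ℕ) (hs : ∀ i ∈ s, 0 < i)
    (c : ℕ → Set ℕ) (hc : ∀ i, i ∉ s → 0 ∈ c i) :
    #{p : n.Partition | (∀ j, p.parts.count j ∈ c j) ∧ ∀ j ∈ p.parts, j ∈ s} =
      coeff (R := α) n (∏ i ∈ s, indicatorSeries α ((· * i) '' c i)) := by
  simp_rw [coeff_prod, coeff_indicator, prod_boole, sum_boole]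
  apply congr_arg
  simp only [mem_univ, forall_true_left, not_and, not_forall, exists_prop,
    Set.mem_image, not_exists]
  set φ : (a : Nat.Partition n) →
    a ∈ filter (fun p ↦ (∀ (j : ℕ), Multiset.count j p.parts ∈ c j) ∧ ∀ j ∈ p.parts, j ∈ s) univ →
    ℕ →₀ ℕ := fun p _ => {
      toFun := fun i => Multiset.count i p.parts • i
      support := Finset.filter (fun i => i ≠ 0) p.parts.toFinset
      mem_support_toFun := fun a => by
        simp only [smul_eq_mul, ne_eq, mul_eq_zero, Multiset.count_eq_zero]
        rw [not_or, not_not]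
        simp only [Multiset.mem_toFinset, not_not, mem_filter] }
  refine Finset.card_bij φ ?_ ?_ ?_
  · intro a ha
    simp only [φ, not_forall, not_exists, not_and, exists_prop, mem_filter]
    rw [mem_finsuppAntidiag]
    dsimp only [ne_eq, smul_eq_mul, id_eq, eq_mpr_eq_cast, le_eq_subset, Finsupp.coe_mk]
    simp only [mem_univ, forall_true_left, not_and, not_forall, exists_prop,
      mem_filter, true_and] at ha
    refine ⟨⟨?_, fun i ↦ ?_⟩, fun i _ ↦ ⟨a.parts.count i, ha.1 i, rfl⟩⟩
    · conv_rhs => simp [← a.parts_sum]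
      rw [sum_multiset_count_of_subset _ s]
      · simp only [smul_eq_mul]
      · intro i
        simp only [Multiset.mem_toFinset, not_not, mem_filter]
        apply ha.2
    · simp only [ne_eq, Multiset.mem_toFinset, not_not, mem_filter, and_imp]
      exact fun hi _ ↦ ha.2 i hi
  · intro p₁ hp₁ p₂ hp₂ h
    apply Nat.Partition.ext
    simp only [true_and, mem_univ, mem_filter] at hp₁ hp₂
    ext i
    simp only [φ, ne_eq, Multiset.mem_toFinset, not_not, smul_eq_mul, Finsupp.mk.injEq] at h
    by_cases hi : i = 0
    · rw [hi]
      rw [Multiset.count_eq_zero_of_notMem]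
      · rw [Multiset.count_eq_zero_of_notMem]
        intro a; exact Nat.lt_irrefl 0 (hs 0 (hp₂.2 0 a))
      intro a; exact Nat.lt_irrefl 0 (hs 0 (hp₁.2 0 a))
    · rw [← mul_left_inj' hi]
      rw [funext_iff] at h
      exact h.2 i
  · simp only [φ, mem_filter, mem_finsuppAntidiag, mem_univ, exists_prop, true_and, and_assoc]
    rintro f ⟨hf, hf₃, hf₄⟩
    have hf' : f ∈ finsuppAntidiag s n := mem_finsuppAntidiag.mpr ⟨hf, hf₃⟩
    simp only [mem_finsuppAntidiag] at hf'
    refine ⟨⟨∑ i ∈ s, Multiset.replicate (f i / i) i, ?_, ?_⟩, ?_, ?_, ?_⟩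
    · intro i hi
      simp only [exists_prop, Multiset.mem_sum, mem_map, Function.Embedding.coeFn_mk] at hi
      rcases hi with ⟨t, ht, z⟩
      apply hs
      rwa [Multiset.eq_of_mem_replicate z]
    · simp_rw [Multiset.sum_sum, Multiset.sum_replicate, Nat.nsmul_eq_mul]
      rw [← hf'.1]
      refine sum_congr rfl fun i hi => Nat.div_mul_cancel ?_
      rcases hf₄ i hi with ⟨w, _, hw₂⟩
      rw [← hw₂]
      exact dvd_mul_left _ _
    · intro i
      simp_rw [Multiset.count_sum', Multiset.count_replicate, sum_ite_eq']
      split_ifs with h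
      · rcases hf₄ i h with ⟨w, hw₁, hw₂⟩
        rwa [← hw₂, Nat.mul_div_cancel _ (hs i h)]
      · exact hc _ h
    · intro i hi
      rw [Multiset.mem_sum] at hi
      rcases hi with ⟨j, hj₁, hj₂⟩
      rwa [Multiset.eq_of_mem_replicate hj₂]
    · ext i
      simp_rw [Multiset.count_sum', Multiset.count_replicate, sum_ite_eq']
      simp only [ne_eq, Multiset.mem_toFinset, not_not, smul_eq_mul, ite_mul,
        zero_mul, Finsupp.coe_mk]
      split_ifs with h
      · apply Nat.div_mul_cancel
        rcases hf₄ i h with ⟨w, _, hw₂⟩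
        apply Dvd.intro_left _ hw₂
      · apply symm
        rw [← Finsupp.notMem_support_iff]
        exact notMem_mono hf'.2 h

end GF

namespace Stmt6q
open Stmt6p GF

lemma coeff_qPochInv (M v : ℕ) (hv : v ≤ M) :
    coeff (R := ℚ) v (∏ i ∈ range M, (1 - (X : PowerSeries ℚ) ^ (i + 1))⁻¹) = (p v : ℚ) := by
  classical
  have h := GF.partialGF_prop ℚ v ((range M).map ⟨Nat.succ, Nat.succ_injective⟩)
    (by
      simp only [mem_map, Function.Embedding.coeFn_mk]
      rintro i ⟨_, _, rfl⟩
      exact Nat.succ_pos _)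
    (fun _ => Set.univ) (fun _ _ => trivial)
  rw [Finset.prod_map] at h
  have hser : ∀ i : ℕ, indicatorSeries ℚ ((· * (Function.Embedding.mk Nat.succ Nat.succ_injective)
      i) '' Set.univ) = (1 - (X : PowerSeries ℚ) ^ (i + 1))⁻¹ := by
    intro i
    have hset : ((· * (Function.Embedding.mk Nat.succ Nat.succ_injective) i) '' Set.univ) =
        {k | i + 1 ∣ k} := by
      ext k
      simp only [Set.mem_image, Set.mem_setOf_eq, Function.Embedding.coeFn_mk, Set.mem_univ,
        true_and, Nat.succ_eq_add_one]
      constructor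
      · rintro ⟨a, rfl⟩
        exact Dvd.intro_left a rfl
      · rintro ⟨a, rfl⟩
        exact ⟨a, mul_comm _ _⟩
    rw [hset, num_series']
  simp_rw [hser] at h
  rw [← h]
  have hfull : ∀ P : v.Partition, P ∈ (Finset.univ : Finset v.Partition) →
      ((∀ j, Multiset.count j P.parts ∈ (fun _ => Set.univ : ℕ → Set ℕ) j) ∧
      ∀ j ∈ P.parts, j ∈ (range M).map ⟨Nat.succ, Nat.succ_injective⟩) := by
    intro P _
    refine ⟨fun j => trivial, fun j hj => ?_⟩
    have h1 : 0 < j := P.parts_pos hj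
    have h2 : j ≤ v := (Multiset.le_sum_of_mem hj).trans_eq P.parts_sum
    simp only [mem_map, mem_range, Function.Embedding.coeFn_mk, Nat.succ_eq_add_one]
    exact ⟨j - 1, by omega, by omega⟩
  rw [Finset.filter_true_of_mem hfull, Finset.card_univ, p, Nat.card_eq_fintype_card]

noncomputable def PP : PowerSeries ℚ := PowerSeries.mk fun n => (p n : ℚ)

lemma qPoch_mul_inv (M : ℕ) :
    qPoch M * (∏ i ∈ range M, (1 - (X : PowerSeries ℚ) ^ (i + 1))⁻¹) = 1 := by
  rw [qPoch, ← Finset.prod_mul_distrib]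
  rw [Finset.prod_congr rfl (fun i _ => PowerSeries.mul_inv_cancel _
    (by rw [constantCoeff_factor]; norm_num))]
  exact Finset.prod_const_one

lemma E_mul_PP : E * PP = 1 := by
  ext k
  rw [coeff_mul]
  have hc : ∀ x ∈ antidiagonal k, coeff (R := ℚ) x.1 E * coeff (R := ℚ) x.2 PP =
      coeff (R := ℚ) x.1 (qPoch k) * coeff (R := ℚ) x.2 (∏ i ∈ range k,
        (1 - (X : PowerSeries ℚ) ^ (i + 1))⁻¹) := by
    intro x hx
    rw [Finset.HasAntidiagonal.mem_antidiagonal] at hx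
    rw [coeff_E' x.1 k (by omega), PP, coeff_mk, coeff_qPochInv k x.2 (by omega)]
  rw [Finset.sum_congr rfl hc, ← coeff_mul, qPoch_mul_inv]

lemma constantCoeff_E : constantCoeff (R := ℚ) E = 1 := by
  have h := coeff_E 0
  rw [qPoch] at h
  simp only [range_zero, Finset.prod_empty, coeff_zero_eq_constantCoeff, map_one] at h
  exact h

lemma E_inv_eq : E⁻¹ = PP := by
  rw [PowerSeries.inv_eq_iff_mul_eq_one (by rw [constantCoeff_E]; norm_num)]
  rw [mul_comm]
  exact E_mul_PP

end Stmt6q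

namespace Stmt6r
open Stmt6 Stmt6p Stmt6q

lemma self_le_g (n : ℕ) : n ≤ g n := by
  have := two_g n
  nlinarith [sq_nonneg n]

noncomputable def sfun (n : ℕ) : PowerSeries ℚ :=
  ((-1 : ℚ) ^ n) • (X : PowerSeries ℚ) ^ (n * (3 * n + 1) / 2)

lemma coeff_sfun (k n : ℕ) :
    coeff (R := ℚ) k (sfun n) = (-1 : ℚ) ^ n * (if k = g n then 1 else 0) := by
  rw [sfun, map_smul, smul_eq_mul, coeff_X_pow]
  rfl

lemma coeff_sfun_eq_zero {k n : ℕ} (h : k < n) : coeff (R := ℚ) k (sfun n) = 0 := by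
  rw [coeff_sfun, if_neg, mul_zero]
  have := self_le_g n
  omega

noncomputable def SS : PowerSeries ℚ :=
  PowerSeries.mk fun k => ∑ n ∈ range (k + 1), coeff (R := ℚ) k (sfun n)

lemma hasSum_S : HasSum sfun SS := by
  show Filter.Tendsto _ Filter.atTop (nhds SS)
  apply tendsto_coord
  intro k
  refine ⟨range (k + 1), fun s hs => ?_⟩
  rw [map_sum, SS, coeff_mk]
  symm
  apply Finset.sum_subset hs
  intro n _ hn
  rw [Finset.mem_range, not_lt] at hn
  exact coeff_sfun_eq_zero (by omega)

lemma coeff_SS_ext (v m : ℕ) (h : v ≤ m) :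
    coeff (R := ℚ) v SS = ∑ n ∈ range (m + 1), coeff (R := ℚ) v (sfun n) := by
  rw [SS, coeff_mk]
  apply Finset.sum_subset (Finset.range_subset_range.2 (by omega))
  intro n _ hn
  rw [Finset.mem_range, not_lt] at hn
  exact coeff_sfun_eq_zero (by omega)

lemma coeff_conv (m : ℕ) :
    coeff (R := ℚ) m (PP * SS) =
      ∑ n ∈ range (m + 1), (if g n ≤ m then (-1 : ℚ) ^ n * (p (m - g n) : ℚ) else 0) := by
  rw [coeff_mul]
  have step1 : ∀ x ∈ antidiagonal m, coeff (R := ℚ) x.1 PP * coeff (R := ℚ) x.2 SS =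
      ∑ n ∈ range (m + 1), (p x.1 : ℚ) * coeff (R := ℚ) x.2 (sfun n) := by
    intro x hx
    rw [Finset.HasAntidiagonal.mem_antidiagonal] at hx
    rw [PP, coeff_mk, coeff_SS_ext x.2 m (by omega), Finset.mul_sum]
  rw [Finset.sum_congr rfl step1, Finset.sum_comm]
  apply Finset.sum_congr rfl
  intro n _
  rw [Finset.Nat.sum_antidiagonal_eq_sum_range_succ_mk]
  by_cases hg : g n ≤ m
  · rw [if_pos hg]
    rw [Finset.sum_eq_single_of_mem (m - g n) (Finset.mem_range.2 (by omega))]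
    · rw [coeff_sfun, if_pos (by omega)]
      ring
    · intro k hk hne
      rw [Finset.mem_range] at hk
      rw [coeff_sfun, if_neg (by omega), mul_zero, mul_zero]
  · rw [if_neg hg]
    apply Finset.sum_eq_zero
    intro k hk
    rw [Finset.mem_range] at hk
    rw [coeff_sfun, if_neg (by omega), mul_zero, mul_zero]

end Stmt6r


open Stmt6 Stmt6x Stmt6y Stmt6c Stmt6z Stmt6p Stmt6q Stmt6r in
theorem stmt6 (m : ℕ) :
    (PowerSeries.coeff (R := ℚ) m)
        (E⁻¹ * ∑' n : ℕ, ((-1 : ℚ) ^ n) • (X : PowerSeries ℚ) ^ (n * (3 * n + 1) / 2)) =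
      (Nrank m : ℚ) := by
  have hS : (∑' n : ℕ, ((-1 : ℚ) ^ n) • (X : PowerSeries ℚ) ^ (n * (3 * n + 1) / 2)) = SS :=
    hasSum_S.tsum_eq
  rw [hS, E_inv_eq, coeff_conv m]
  have hcomb := comb_main m
  have hcast : (Nrank m : ℚ) =
      ∑ j ∈ Finset.range (m + 1), (-1 : ℚ) ^ j * (if g j ≤ m then (p (m - g j) : ℚ) else 0) := by
    have h2 : ((Nrank m : ℤ) : ℚ) = ((∑ j ∈ Finset.range (m + 1),
        (-1 : ℤ) ^ j * (if g j ≤ m then (p (m - g j) : ℤ) else 0) : ℤ) : ℚ) := by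
      exact_mod_cast congrArg (fun z : ℤ => (z : ℚ)) hcomb
    push_cast at h2
    exact h2
  rw [hcast]
  apply Finset.sum_congr rfl
  intro n _
  by_cases hg : g n ≤ m
  · rw [if_pos hg, if_pos hg]
  · rw [if_neg hg, if_neg hg, mul_zero]
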